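/- Let p > 1 and let a, b ∈ ℝ with (a, b) ≠ (0, 0). Then |b|^{p−2} b − |a|^{p−2} a = (p−1)(b−a) ∫₀¹ |a + s(b−a)|^{p−2} ds, where the integral on the right-hand side is finite. -/

import Mathlib

open MeasureTheory Real

lemma absRpow_intervalIntegrable_zero {r : ℝ} (hr : -1 < r) (c : ℝ) :
    IntervalIntegrable (fun x : ℝ => |x| ^ r) volume 0 c := by
  rcases le_total 0 c with hc | hc
  · refine (intervalIntegral.intervalIntegrable_rpow' hr (a := 0) (b := c)).congr ?_
    intro x hx
    dsimp only
    rw [Set.uIoc_of_le hc] at hx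
    rw [abs_of_nonneg hx.1.le]
  · rw [IntervalIntegrable.iff_comp_neg]
    simp only [abs_neg, neg_zero]
    refine (intervalIntegral.intervalIntegrable_rpow' hr (a := 0) (b := -c)).congr ?_
    intro x hx
    dsimp only
    rw [Set.uIoc_of_le (by linarith : (0:ℝ) ≤ -c)] at hx
    rw [abs_of_nonneg hx.1.le]

lemma absRpow_intervalIntegrable {r : ℝ} (hr : -1 < r) (a b : ℝ) :
    IntervalIntegrable (fun x : ℝ => |x| ^ r) volume a b :=
  (absRpow_intervalIntegrable_zero hr a).symm.trans (absRpow_intervalIntegrable_zero hr b)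

lemma absRpow_integral_zero {r : ℝ} (hr : -1 < r) (c : ℝ) :
    ∫ x in (0:ℝ)..c, |x| ^ r = |c| ^ r * c / (r + 1) := by
  have hr1 : r + 1 ≠ 0 := by linarith
  rcases le_total 0 c with hc | hc
  · rw [intervalIntegral.integral_congr (g := fun x : ℝ => x ^ r)
      (fun x hx => by
        rw [Set.uIcc_of_le hc] at hx
        simp [abs_of_nonneg hx.1]),
      integral_rpow (Or.inl hr)]
    rw [abs_of_nonneg hc, Real.zero_rpow (by linarith : r + 1 ≠ 0)]
    rcases eq_or_lt_of_le hc with h | h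
    · rw [← h]; simp [Real.zero_rpow (by linarith : r + 1 ≠ 0)]
    · rw [Real.rpow_add_one (ne_of_gt h), sub_zero]
  · have key : ∫ x in (0:ℝ)..c, |x| ^ r = - ∫ x in (0:ℝ)..(-c), |x| ^ r := by
      have : (∫ x in (0:ℝ)..c, |(-x)| ^ r) = ∫ x in (-c)..(-0:ℝ), |x| ^ r :=
        intervalIntegral.integral_comp_neg (fun x => |x| ^ r)
      simp only [abs_neg, neg_zero] at this
      rw [this, intervalIntegral.integral_symm]
    rw [key]
    have h2 : ∫ x in (0:ℝ)..(-c), |x| ^ r = |(-c)| ^ r * (-c) / (r + 1) := by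
      have hc' : (0:ℝ) ≤ -c := by linarith
      rw [intervalIntegral.integral_congr (g := fun x : ℝ => x ^ r)
        (fun x hx => by
          rw [Set.uIcc_of_le hc'] at hx
          simp [abs_of_nonneg hx.1]),
        integral_rpow (Or.inl hr)]
      rw [abs_of_nonneg hc', Real.zero_rpow (by linarith : r + 1 ≠ 0)]
      rcases eq_or_lt_of_le hc' with h | h
      · rw [← h]; simp [Real.zero_rpow (by linarith : r + 1 ≠ 0)]
      · rw [Real.rpow_add_one (ne_of_gt h), sub_zero]
    rw [h2, abs_neg]
    ring

lemma absRpow_integral {r : ℝ} (hr : -1 < r) (a b : ℝ) :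
    ∫ x in a..b, |x| ^ r = (|b| ^ r * b - |a| ^ r * a) / (r + 1) := by
  rw [← intervalIntegral.integral_add_adjacent_intervals
      (absRpow_intervalIntegrable_zero hr a).symm (absRpow_intervalIntegrable_zero hr b),
    intervalIntegral.integral_symm, absRpow_integral_zero hr, absRpow_integral_zero hr]
  ring

/-- For `p > 1` and `(a,b) ≠ (0,0)`,
`|b|^{p-2}b − |a|^{p-2}a = (p−1)(b−a) ∫₀¹ |a + s(b−a)|^{p-2} ds`,
the integral on the right-hand side being finite. -/
theorem abs_rpow_sub_eq_integral (p : ℝ) (hp : 1 < p) (a b : ℝ)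
    (hab : (a, b) ≠ ((0 : ℝ), (0 : ℝ))) :
    IntervalIntegrable (fun s : ℝ => |a + s * (b - a)| ^ (p - 2)) volume 0 1 ∧
    |b| ^ (p - 2) * b - |a| ^ (p - 2) * a =
      (p - 1) * (b - a) * ∫ s in (0 : ℝ)..1, |a + s * (b - a)| ^ (p - 2) := by
  have hr : (-1 : ℝ) < p - 2 := by linarith
  rcases eq_or_ne b a with rfl | hba
  · simp only [sub_self, mul_zero, add_zero]
    exact ⟨intervalIntegrable_const, by ring⟩
  · have hc : b - a ≠ 0 := sub_ne_zero.mpr hba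
    constructor
    · have h1 : IntervalIntegrable (fun x : ℝ => |x + a| ^ (p - 2)) volume (a - a) (b - a) :=
        (absRpow_intervalIntegrable hr a b).comp_add_right a
      have h2 : IntervalIntegrable (fun s : ℝ => |s * (b - a) + a| ^ (p - 2)) volume
          ((a - a) / (b - a)) ((b - a) / (b - a)) := h1.comp_mul_right (c := b - a)
      rw [sub_self, zero_div, div_self hc] at h2
      refine h2.congr ?_
      intro x _
      ring_nf
    · have hsub : (∫ s in (0:ℝ)..1, |a + (b - a) * s| ^ (p - 2)) =
          (b - a)⁻¹ • ∫ x in (a + (b - a) * 0)..(a + (b - a) * 1), |x| ^ (p - 2) :=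
        intervalIntegral.integral_comp_add_mul (fun x => |x| ^ (p - 2)) hc a
      have heq : (∫ s in (0:ℝ)..1, |a + s * (b - a)| ^ (p - 2)) =
          ∫ s in (0:ℝ)..1, |a + (b - a) * s| ^ (p - 2) := by
        apply intervalIntegral.integral_congr
        intro x _
        ring_nf
      rw [heq, hsub]
      simp only [mul_zero, add_zero, mul_one, smul_eq_mul]
      rw [absRpow_integral hr a (a + (b - a))]
      have hp1 : p - 2 + 1 ≠ 0 := by linarith
      have : a + (b - a) = b := by ring
      rw [this]
      field_simp
      ring
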